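/- If X is a Gorenstein integral projective curve and D, E are generalized divisors on X with E Cartier, then the natural surjection I_D ⊗ I_E → I_{D+E} is an isomorphism, where I_{D+E} is the subsheaf of K generated by products fg with f a local section of I_D and g a local section of I_E. -/

import Mathlib

/-!
STATEMENT 4: If X is a Gorenstein integral projective curve and D, E are
generalized divisors on X with E Cartier, then the natural surjection
I_D ⊗ I_E → I_{D+E} is an isomorphism, where I_{D+E} ⊆ K is generated by the
products of local sections of I_D and I_E.

The claim is local on X, so we formalize the statement at the level of
(sections over an affine open / stalks): R is the coordinate ring (a domain;
the local rings of a Gorenstein curve), F = k(X) its fraction field, I_D and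
I_E are nonzero R-submodules of F, and "E is Cartier" means I_E is locally
free of rank 1, i.e. (locally) principal: I_E = R·g for some g ≠ 0.
`Submodule.mulMap'` is the natural surjection I_D ⊗ I_E → I_D · I_E = I_{D+E};
the conclusion is that it is bijective, i.e. an isomorphism onto I_{D+E}.
-/

open TensorProduct in
theorem tensor_with_cartier_is_sum
    (R : Type*) [CommRing R] [IsDomain R]
    (F : Type*) [Field F] [Algebra R F] [IsFractionRing R F]
    (ID IE : Submodule R F) (hD : ID ≠ ⊥)
    (g : F) (hg : g ≠ 0) (hE : IE = Submodule.span R {g}) :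
    Function.Bijective (Submodule.mulMap' ID IE) := by
  subst hE
  have hgE : g ∈ Submodule.span R {g} := Submodule.mem_span_singleton_self g
  set IE := Submodule.span R {g} with hE
  set gE : IE := ⟨g, hgE⟩ with hgEdef
  have key : ∀ t : ↥ID ⊗[R] ↥IE, ∃ x : ID, t = x ⊗ₜ[R] gE := by
    intro t
    induction t using TensorProduct.induction_on with
    | zero => exact ⟨0, by simp⟩
    | tmul x y =>
      obtain ⟨r, hr⟩ : ∃ r : R, r • g = (y : F) :=
        Submodule.mem_span_singleton.mp y.2
      refine ⟨r • x, ?_⟩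
      rw [TensorProduct.smul_tmul]
      congr 1
      exact Subtype.ext hr.symm
    | add a b ha hb =>
      obtain ⟨x, hx⟩ := ha; obtain ⟨y', hy⟩ := hb
      exact ⟨x + y', by rw [hx, hy, TensorProduct.add_tmul]⟩
  constructor
  · rw [injective_iff_map_eq_zero]
    intro t ht
    obtain ⟨x, rfl⟩ := key t
    have h0 : (x : F) * g = 0 := by
      have := congrArg (Subtype.val : ↥(ID * IE) → F) ht
      rwa [Submodule.val_mulMap'_tmul] at this
    have hx0 : (x : F) = 0 := by
      rcases mul_eq_zero.mp h0 with h | h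
      · exact h
      · exact absurd h hg
    have : x = 0 := Subtype.ext hx0
    rw [this, TensorProduct.zero_tmul]
  · exact Submodule.mulMap'_surjective ID IE
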